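/- arXiv:1312.3911 — 4 statements merged into one kernel-verified Lean document; each statement's English description precedes it below -/
import Mathlib

section
/- Let (X,d) be a metric space, L ≥ 1 and r₀ > 0, and suppose X is (L,r₀)-linearly locally contractible. Then for every x ∈ X and every radius 0 < r < r₀ there exists a connected open set U ⊆ X satisfying B(x, r/(2L)) ⊆ U ⊆ B(x, r). -/
/-- A metric space `X` is `(L, r₀)`-linearly locally contractible if every open ball of
radius `r < r₀` is contractible inside the concentric ball of radius `L * r`: there is a
continuous homotopy `H : B(x,r) × [0,1] → X`, taking values in `B(x, L*r)`, with
`H(·,0)` the inclusion and `H(·,1)` a constant map. -/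
def LLC (X : Type) [MetricSpace X] (L r₀ : ℝ) : Prop :=
  ∀ (x : X) (r : ℝ), 0 < r → r < r₀ →
    ∃ H : ↥(Metric.ball x r) × ↥(Set.Icc (0:ℝ) 1) → X,
      Continuous H ∧
      (∀ y : ↥(Metric.ball x r), H (y, ⟨0, Set.left_mem_Icc.2 zero_le_one⟩) = (y : X)) ∧
      (∃ c : X, ∀ y : ↥(Metric.ball x r), H (y, ⟨1, Set.right_mem_Icc.2 zero_le_one⟩) = c) ∧
      (∀ p, H p ∈ Metric.ball x (L * r))

/-- In an LLC space, any point of a ball `B(x',s)` with `s < r₀` can be joined to the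
center `x'` by a connected set inside `B(x', L*s)`. -/
theorem llc_connect_aux (X : Type) [MetricSpace X] (L r₀ : ℝ)
    (h : LLC X L r₀) (x' : X) (s : ℝ) (hs : 0 < s) (hs' : s < r₀)
    (y : X) (hy : y ∈ Metric.ball x' s) :
    ∃ S : Set X, IsPreconnected S ∧ y ∈ S ∧ x' ∈ S ∧ S ⊆ Metric.ball x' (L * s) := by
  obtain ⟨H, hH, h0, ⟨c, hc⟩, hball⟩ := h x' s hs hs'
  haveI : PreconnectedSpace ↥(Set.Icc (0:ℝ) 1) := Subtype.preconnectedSpace isPreconnected_Icc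
  have hx'mem : x' ∈ Metric.ball x' s := Metric.mem_ball_self hs
  set y0 : ↥(Metric.ball x' s) := ⟨y, hy⟩
  set x0 : ↥(Metric.ball x' s) := ⟨x', hx'mem⟩
  set f : ↥(Set.Icc (0:ℝ) 1) → X := fun t => H (y0, t) with hf_def
  set g : ↥(Set.Icc (0:ℝ) 1) → X := fun t => H (x0, t) with hg_def
  have hf : Continuous f := hH.comp (Continuous.prodMk_right y0)
  have hg : Continuous g := hH.comp (Continuous.prodMk_right x0)
  refine ⟨Set.range f ∪ Set.range g, ?_, ?_, ?_, ?_⟩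
  · exact IsPreconnected.union c ⟨_, hc y0⟩ ⟨_, hc x0⟩
      (isPreconnected_range hf) (isPreconnected_range hg)
  · exact Or.inl ⟨⟨0, Set.left_mem_Icc.2 zero_le_one⟩, h0 y0⟩
  · exact Or.inr ⟨⟨0, Set.left_mem_Icc.2 zero_le_one⟩, h0 x0⟩
  · rintro w (⟨t, rfl⟩ | ⟨t, rfl⟩) <;> exact hball _

/-- If `X` is `(L,r₀)`-LLC then for every `x ∈ X` and every `0 < r < r₀` there is a
connected open set `U` with `B(x, r/(2L)) ⊆ U ⊆ B(x,r)`. -/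
theorem llc_exists_connected_open (X : Type) [MetricSpace X] (L r₀ : ℝ)
    (hL : 1 ≤ L) (hr₀ : 0 < r₀) (h : LLC X L r₀)
    (x : X) (r : ℝ) (hr : 0 < r) (hrr₀ : r < r₀) :
    ∃ U : Set X, IsOpen U ∧ IsConnected U ∧
      Metric.ball x (r / (2 * L)) ⊆ U ∧ U ⊆ Metric.ball x r := by
  have hL0 : (0:ℝ) < L := lt_of_lt_of_le one_pos hL
  set U : Set X := connectedComponentIn (Metric.ball x r) x with hU
  have hxball : x ∈ Metric.ball x r := Metric.mem_ball_self hr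
  have hUsub : U ⊆ Metric.ball x r := connectedComponentIn_subset _ _
  refine ⟨U, ?_, isConnected_connectedComponentIn_iff.2 hxball, ?_, hUsub⟩
  · -- openness
    rw [Metric.isOpen_iff]
    intro y hyU
    have hyball : y ∈ Metric.ball x r := hUsub hyU
    have hδ : 0 < r - dist y x := sub_pos.2 (Metric.mem_ball.1 hyball)
    set s : ℝ := min ((r - dist y x) / (2 * L)) (r₀ / 2) with hs_def
    have hs : 0 < s := lt_min (div_pos hδ (by positivity)) (by positivity)
    have hsr₀ : s < r₀ := lt_of_le_of_lt (min_le_right _ _) (by linarith)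
    have hLs : L * s ≤ (r - dist y x) / 2 := by
      have : s ≤ (r - dist y x) / (2 * L) := min_le_left _ _
      calc L * s ≤ L * ((r - dist y x) / (2 * L)) := by
            exact mul_le_mul_of_nonneg_left this hL0.le
        _ = (r - dist y x) / 2 := by field_simp
    refine ⟨s, hs, fun z hz => ?_⟩
    obtain ⟨S, hScon, hzS, hyS, hSsub⟩ := llc_connect_aux X L r₀ h y s hs hsr₀ z hz
    have hSball : S ⊆ Metric.ball x r := by
      intro w hw
      have hwy : dist w y < L * s := Metric.mem_ball.1 (hSsub hw)
      have : dist w x ≤ dist w y + dist y x := dist_triangle _ _ _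
      have : dist w x < r := by
        have := dist_triangle w y x
        nlinarith [Metric.mem_ball.1 hyball]
      exact Metric.mem_ball.2 this
    have hsub : S ⊆ connectedComponentIn (Metric.ball x r) y :=
      hScon.subset_connectedComponentIn hyS hSball
    have heq : connectedComponentIn (Metric.ball x r) x
        = connectedComponentIn (Metric.ball x r) y := connectedComponentIn_eq hyU
    rw [hU, heq]
    exact hsub hzS
  · -- ball x (r/(2L)) ⊆ U
    intro y hy
    have hs : (0:ℝ) < r / (2 * L) := by positivity
    have hsr₀ : r / (2 * L) < r₀ := by
      have h1 : r / (2 * L) ≤ r / 2 := by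
        apply div_le_div_of_nonneg_left hr.le (by norm_num)
        nlinarith
      linarith
    obtain ⟨S, hScon, hyS, hxS, hSsub⟩ :=
      llc_connect_aux X L r₀ h x (r / (2 * L)) hs hsr₀ y hy
    have hLs : L * (r / (2 * L)) = r / 2 := by field_simp
    have hSball : S ⊆ Metric.ball x r := by
      intro w hw
      have := Metric.mem_ball.1 (hSsub hw)
      rw [hLs] at this
      exact Metric.mem_ball.2 (by linarith)
    exact hScon.subset_connectedComponentIn hxS hSball hyS
end

section
/- Assume the direct-system setup with the interleaving hypothesis (H) and properties (S) and (K). Then the canonical map i_2 : F_2 → F_∞ is surjective. -/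
/-- Claim 3.2 of the paper (surjectivity of `i₂ : F₂ → F∞`), under the direct-system
setup with the interleaving hypothesis (H) and properties (S) and (K). -/
theorem i_two_surjective
    (F : ℕ → Type) [∀ n, AddCommGroup (F n)]
    (Finf : Type) [AddCommGroup Finf]
    (i2 : ∀ n m : ℕ, n ≤ m → (F n →+ F m))
    (i : ∀ n, F n →+ Finf)
    (hFid : ∀ (n : ℕ) (x : F n), i2 n n le_rfl x = x)
    (hFcomp : ∀ (n m l : ℕ) (h1 : n ≤ m) (h2 : m ≤ l) (x : F n),
      i2 m l h2 (i2 n m h1 x) = i2 n l (h1.trans h2) x)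
    (hicompat : ∀ (n m : ℕ) (h : n ≤ m) (x : F n), i m (i2 n m h x) = i n x)
    (hiexh : ∀ z : Finf, ∃ (n : ℕ) (x : F n), i n x = z)
    (hiker : ∀ (n : ℕ) (x : F n), i n x = 0 → ∃ (m : ℕ) (h : n ≤ m), i2 n m h x = 0)
    (G : ℕ → ℕ → Type) [∀ k n, AddCommGroup (G k n)]
    (Ginf : ℕ → Type) [∀ k, AddCommGroup (Ginf k)]
    (j2 : ∀ (k n m : ℕ), n ≤ m → (G k n →+ G k m))
    (j : ∀ k n, G k n →+ Ginf k)
    (hGid : ∀ (k n : ℕ) (y : G k n), j2 k n n le_rfl y = y)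
    (hGcomp : ∀ (k n m l : ℕ) (h1 : n ≤ m) (h2 : m ≤ l) (y : G k n),
      j2 k m l h2 (j2 k n m h1 y) = j2 k n l (h1.trans h2) y)
    (hjcompat : ∀ (k n m : ℕ) (h : n ≤ m) (y : G k n), j k m (j2 k n m h y) = j k n y)
    (hjexh : ∀ (k : ℕ) (z : Ginf k), ∃ (n : ℕ) (y : G k n), j k n y = z)
    (hjker : ∀ (k n : ℕ) (y : G k n), j k n y = 0 → ∃ (m : ℕ) (h : n ≤ m), j2 k n m h y = 0)
    (hH : ∀ n₀ : ℕ, ∃ (k : ℕ) (a : ∀ n, F n →+ G k (n+1)) (b : ∀ n, G k n →+ F (n+1)),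
      (∀ n, n + 1 ≤ n₀ → ∀ x : F n,
        a (n+1) (i2 n (n+1) (by omega) x) = j2 k (n+1) (n+2) (by omega) (a n x)) ∧
      (∀ n, n + 1 ≤ n₀ → ∀ y : G k n,
        b (n+1) (j2 k n (n+1) (by omega) y) = i2 (n+1) (n+2) (by omega) (b n y)) ∧
      (∀ n, n + 1 ≤ n₀ → ∀ x : F n, b (n+1) (a n x) = i2 n (n+2) (by omega) x) ∧
      (∀ n, n + 1 ≤ n₀ → ∀ y : G k n, a (n+1) (b n y) = j2 k n (n+2) (by omega) y))
    (hS : ∀ k n, Function.Surjective (j k n))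
    (hK : ∀ (k n : ℕ) (y : G k n), j k n y = 0 → j2 k n (n+1) (by omega) y = 0)
    : Function.Surjective (i 2) := by
  intro z
  obtain ⟨n, x, hx⟩ := hiexh z
  obtain ⟨k, a, b, hab1, hab2, hab3, hab4⟩ := hH (n + 2)
  obtain ⟨y, hy⟩ := hS k 1 (j k (n + 1) (a n x))
  have hd : j k (n + 1) (j2 k 1 (n + 1) (by omega) y - a n x) = 0 := by
    rw [map_sub, hjcompat, hy, sub_self]
  have hK' := hK k (n + 1) _ hd
  rw [map_sub, sub_eq_zero] at hK'
  have key : ∀ m : ℕ, m ≤ n + 1 →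
      b (m + 1) (j2 k 1 (m + 1) (by omega) y) = i2 2 (m + 2) (by omega) (b 1 y) := by
    intro m
    induction m with
    | zero =>
      intro _
      rw [hGid, hFid]
    | succ m ih =>
      intro hm
      have h1 : j2 k 1 (m + 2) (by omega) y
          = j2 k (m + 1) (m + 2) (by omega) (j2 k 1 (m + 1) (by omega) y) :=
        (hGcomp k 1 (m + 1) (m + 2) (by omega) (by omega) y).symm
      rw [h1, hab2 (m + 1) (by omega), ih (by omega), hFcomp]
  refine ⟨b 1 y, ?_⟩
  have h2 : i2 2 (n + 3) (by omega) (b 1 y)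
      = b (n + 2) (j2 k 1 (n + 2) (by omega) y) := (key (n + 1) le_rfl).symm
  have h3 : j2 k 1 (n + 2) (by omega) y = j2 k (n + 1) (n + 2) (by omega) (a n x) := by
    rw [← hK', hGcomp]
  have h4 := hab2 (n + 1) (by omega) (a n x)
  have h5 := hab3 n (by omega) x
  calc i 2 (b 1 y) = i (n + 3) (i2 2 (n + 3) (by omega) (b 1 y)) :=
        (hicompat 2 (n + 3) (by omega) (b 1 y)).symm
    _ = z := by rw [h2, h3, h4, h5, hFcomp, hicompat, hx]
end

section
/- Let 0 < c ≤ C be constants and let g : ℝ → ℝ² satisfy c|x−y|^{1/2} ≤ ‖g(x) − g(y)‖ ≤ C|x−y|^{1/2} for all x, y ∈ ℝ. Then g is not surjective onto ℝ². Equivalently, there is no bi-Lipschitz homeomorphism from the snowflaked real line (ℝ, d_½) onto the Euclidean plane. -/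
/-- No map `g : ℝ → ℝ²` satisfying `c|x-y|^(1/2) ≤ ‖g x - g y‖ ≤ C|x-y|^(1/2)` (i.e. no
bi-Lipschitz map from the snowflaked real line to the Euclidean plane) is surjective. -/
theorem snowflake_bilipschitz_not_surjective (c C : ℝ) (hc : 0 < c) (hcC : c ≤ C)
    (g : ℝ → EuclideanSpace ℝ (Fin 2))
    (hlow : ∀ x y : ℝ, c * |x - y| ^ ((1 : ℝ) / 2) ≤ ‖g x - g y‖)
    (hup : ∀ x y : ℝ, ‖g x - g y‖ ≤ C * |x - y| ^ ((1 : ℝ) / 2)) :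
    ¬ Function.Surjective g := by
  intro hsurj
  have hinj : Function.Injective g := by
    intro x y hxy
    by_contra hne
    have h1 := hlow x y
    rw [hxy, sub_self, norm_zero] at h1
    have hpos : 0 < |x - y| ^ ((1 : ℝ) / 2) :=
      Real.rpow_pos_of_pos (abs_pos.mpr (sub_ne_zero.mpr hne)) _
    nlinarith
  have hbij : Function.Bijective g := ⟨hinj, hsurj⟩
  set e := Equiv.ofBijective g hbij with he
  have hge : ∀ v, g (e.symm v) = v := fun v => e.apply_symm_apply v
  -- continuity of the inverse
  have hsymm_cont : Continuous e.symm := by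
    rw [Metric.continuous_iff]
    intro u ε hε
    refine ⟨c * Real.sqrt ε, by positivity, fun v hv => ?_⟩
    set x := e.symm v
    set y := e.symm u
    have h1 := hlow x y
    rw [hge, hge] at h1
    have h2 : |x - y| ^ ((1 : ℝ) / 2) ≤ ‖v - u‖ / c := by
      rw [le_div_iff₀ hc]; linarith [h1]
    have h3 : ‖v - u‖ / c < Real.sqrt ε := by
      rw [div_lt_iff₀ hc]
      have : dist v u = ‖v - u‖ := by rw [dist_eq_norm]
      rw [this] at hv; linarith
    have h4 : |x - y| ^ ((1 : ℝ) / 2) < Real.sqrt ε := lt_of_le_of_lt h2 h3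
    have h5 : Real.sqrt |x - y| < Real.sqrt ε := by
      rwa [Real.sqrt_eq_rpow]
    have h6 : |x - y| < ε := by
      nlinarith [Real.sq_sqrt (abs_nonneg (x - y)), Real.sq_sqrt hε.le,
        Real.sqrt_nonneg |x - y|, Real.sqrt_nonneg ε]
    rwa [Real.dist_eq]
  -- connectedness of the complement of a point in the plane
  have hrank : 1 < Module.rank ℝ (EuclideanSpace ℝ (Fin 2)) := by
    rw [← Module.finrank_eq_rank, finrank_euclideanSpace_fin]
    norm_num
  have hconn : IsConnected ({g 0}ᶜ : Set (EuclideanSpace ℝ (Fin 2))) :=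
    isConnected_compl_singleton_of_one_lt_rank hrank _
  have himg : e.symm '' ({g 0}ᶜ : Set (EuclideanSpace ℝ (Fin 2))) = ({0}ᶜ : Set ℝ) := by
    ext x
    simp only [Set.mem_image, Set.mem_compl_iff, Set.mem_singleton_iff]
    constructor
    · rintro ⟨v, hv, rfl⟩
      intro h0
      apply hv
      rw [← hge v, h0]
    · intro hx
      exact ⟨g x, fun h => hx (hinj h), e.symm_apply_apply x⟩
  have hconnR : IsConnected ({0}ᶜ : Set ℝ) := by
    rw [← himg]
    exact hconn.image _ hsymm_cont.continuousOn
  have hoc : Set.OrdConnected ({0}ᶜ : Set ℝ) := hconnR.isPreconnected.ordConnected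
  have h0 : (0 : ℝ) ∈ ({0}ᶜ : Set ℝ) := by
    apply hoc.out (show (-1 : ℝ) ∈ ({0}ᶜ : Set ℝ) by norm_num)
      (show (1 : ℝ) ∈ ({0}ᶜ : Set ℝ) by norm_num)
    constructor <;> norm_num
  simp at h0
end

section
/- Let E ⊆ ℝ be a Lebesgue measurable set of positive Lebesgue measure and let 0 < c ≤ C be constants. Then there is no map g : E → ℝ² satisfying c|x−y|^{1/2} ≤ ‖g(x) − g(y)‖ ≤ C|x−y|^{1/2} for all x, y ∈ E. In other words, no map from the snowflaked real line to the Euclidean plane is bi-Lipschitz on any set of positive Lebesgue measure. -/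
open MeasureTheory Set Metric Function
open scoped ENNReal NNReal

/-- From the lower snowflake bound, control `|x - y|` by the image distance. -/
lemma no_bilip_key_up {c a D : ℝ} (hc : 0 < c) (ha : 0 ≤ a)
    (h : c * a ^ ((1 : ℝ) / 2) ≤ D) : a ≤ D ^ 2 / c ^ 2 := by
  have hs : (a ^ ((1 : ℝ) / 2)) ^ (2 : ℕ) = a := by
    rw [← Real.rpow_natCast (a ^ ((1 : ℝ) / 2)) 2, ← Real.rpow_mul ha]
    norm_num
  have h1 : a ^ ((1 : ℝ) / 2) ≤ D / c := by
    rw [le_div_iff₀ hc]; linarith [h]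
  have h2 : (a ^ ((1 : ℝ) / 2)) ^ (2 : ℕ) ≤ (D / c) ^ (2 : ℕ) :=
    pow_le_pow_left₀ (Real.rpow_nonneg ha _) h1 2
  rw [hs, div_pow] at h2
  exact h2

/-- From the upper snowflake bound, control the image distance by `|x - y|`. -/
lemma no_bilip_key_low {C a D : ℝ} (hC : 0 < C) (ha : 0 ≤ a) (hD : 0 ≤ D)
    (h : D ≤ C * a ^ ((1 : ℝ) / 2)) : D ^ 2 / C ^ 2 ≤ a := by
  have hs : (a ^ ((1 : ℝ) / 2)) ^ (2 : ℕ) = a := by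
    rw [← Real.rpow_natCast (a ^ ((1 : ℝ) / 2)) 2, ← Real.rpow_mul ha]
    norm_num
  have h1 : D / C ≤ a ^ ((1 : ℝ) / 2) := by
    rw [div_le_iff₀ hC]; linarith [h]
  have h2 : (D / C) ^ (2 : ℕ) ≤ (a ^ ((1 : ℝ) / 2)) ^ (2 : ℕ) :=
    pow_le_pow_left₀ (by positivity) h1 2
  rw [hs, div_pow] at h2
  exact h2

/-- Distance between two points on a line through `x₀` with unit direction `u`. -/
lemma no_bilip_dist_smul {V : Type*} [NormedAddCommGroup V] [NormedSpace ℝ V]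
    (x₀ u : V) (hu : ‖u‖ = 1) (a b : ℝ) :
    dist (x₀ + a • u) (x₀ + b • u) = |a - b| := by
  rw [dist_eq_norm, add_sub_add_left_eq_sub, ← sub_smul, norm_smul, hu, mul_one,
    Real.norm_eq_abs]

set_option maxHeartbeats 2000000 in
/-- The core argument: no bi-Lipschitz map from a snowflaked compact set of positive
measure into the Euclidean plane. -/
theorem no_bilip_aux (E' : Set ℝ) (hcomp : IsCompact E') (hpos : 0 < volume E')
    (c C : ℝ) (hc : 0 < c) (hC : 0 < C)
    (G : ℝ → EuclideanSpace ℝ (Fin 2))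
    (hlow : ∀ x ∈ E', ∀ y ∈ E', c * |x - y| ^ ((1 : ℝ) / 2) ≤ ‖G x - G y‖)
    (hup : ∀ x ∈ E', ∀ y ∈ E', ‖G x - G y‖ ≤ C * |x - y| ^ ((1 : ℝ) / 2)) : False := by
  classical
  -- two-sided distance bounds
  have hBL : ∀ x ∈ E', ∀ y ∈ E',
      ‖G x - G y‖ ^ 2 / C ^ 2 ≤ |x - y| ∧ |x - y| ≤ ‖G x - G y‖ ^ 2 / c ^ 2 := by
    intro x hx y hy
    exact ⟨no_bilip_key_low hC (abs_nonneg _) (norm_nonneg _) (hup x hx y hy),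
      no_bilip_key_up hc (abs_nonneg _) (hlow x hx y hy)⟩
  -- injectivity
  have hinj : InjOn G E' := by
    intro x hx y hy hxy
    have h1 := (hBL x hx y hy).2
    rw [hxy, sub_self, norm_zero] at h1
    have : |x - y| ≤ 0 := by simpa using h1
    have := abs_nonneg (x - y)
    have hxy0 : |x - y| = 0 := le_antisymm ‹|x - y| ≤ 0› this
    rwa [abs_eq_zero, sub_eq_zero] at hxy0
  -- continuity
  have hcont : ContinuousOn G E' := by
    rw [Metric.continuousOn_iff]
    intro b hb ε hε
    refine ⟨(ε / C) ^ 2, by positivity, fun a ha hab => ?_⟩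
    have h1 : ‖G a - G b‖ ≤ C * |a - b| ^ ((1 : ℝ) / 2) := hup a ha b hb
    have h2 : |a - b| ^ ((1 : ℝ) / 2) < ((ε / C) ^ 2) ^ ((1 : ℝ) / 2) := by
      apply Real.rpow_lt_rpow (abs_nonneg _) _ (by norm_num)
      rwa [Real.dist_eq] at hab
    have h3 : ((ε / C) ^ 2) ^ ((1 : ℝ) / 2) = ε / C := by
      rw [← Real.rpow_natCast (ε / C) 2, ← Real.rpow_mul (by positivity)]
      norm_num
    rw [h3] at h2
    have : ‖G a - G b‖ < ε := by
      calc ‖G a - G b‖ ≤ C * |a - b| ^ ((1 : ℝ) / 2) := h1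
        _ < C * (ε / C) := by exact mul_lt_mul_of_pos_left h2 hC
        _ = ε := by field_simp
    rwa [dist_eq_norm]
  set K : Set (EuclideanSpace ℝ (Fin 2)) := G '' E' with hKdef
  have hKcomp : IsCompact K := hcomp.image_of_continuousOn hcont
  have hKmeas : MeasurableSet K := hKcomp.isClosed.measurableSet
  -- inverse map
  set f : EuclideanSpace ℝ (Fin 2) → ℝ := Function.invFunOn G E' with hfdef
  have hfK : ∀ p ∈ K, f p ∈ E' ∧ G (f p) = p := by
    intro p hp
    rcases hp with ⟨x, hx, rfl⟩
    exact ⟨Function.invFunOn_mem ⟨x, hx, rfl⟩, Function.invFunOn_eq ⟨x, hx, rfl⟩⟩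
  have hfimg : f '' K = E' := hinj.invFunOn_image subset_rfl
  have hfdist : ∀ p ∈ K, ∀ q ∈ K, |f p - f q| ≤ ‖p - q‖ ^ 2 / c ^ 2 := by
    intro p hp q hq
    have h1 := (hBL _ (hfK p hp).1 _ (hfK q hq).1).2
    rwa [(hfK p hp).2, (hfK q hq).2] at h1
  have hfdistC : ∀ p ∈ K, ∀ q ∈ K, ‖p - q‖ ^ 2 / C ^ 2 ≤ |f p - f q| := by
    intro p hp q hq
    have h1 := (hBL _ (hfK p hp).1 _ (hfK q hq).1).1
    rwa [(hfK p hp).2, (hfK q hq).2] at h1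
  -- Hölder continuity of f with exponent 2
  set κ : ℝ≥0 := (⟨c ^ 2, by positivity⟩ : ℝ≥0)⁻¹ with hκdef
  have hκcoe : (κ : ℝ≥0∞) = ENNReal.ofReal (1 / c ^ 2) := by
    rw [ENNReal.ofReal_eq_coe_nnreal (by positivity)]
    norm_cast
    ext
    simp [hκdef]
    exact NNReal.coe_inv _
  have hHolder : HolderOnWith κ 2 f K := by
    intro p hp q hq
    calc edist (f p) (f q) = ENNReal.ofReal (dist (f p) (f q)) := edist_dist _ _
      _ ≤ ENNReal.ofReal (dist p q ^ 2 / c ^ 2) := by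
          apply ENNReal.ofReal_le_ofReal
          rw [Real.dist_eq, dist_eq_norm]
          exact hfdist p hp q hq
      _ = (κ : ℝ≥0∞) * ENNReal.ofReal (dist p q) ^ (((2 : ℝ≥0)) : ℝ) := by
          rw [hκcoe]
          have hcast : (((2 : ℝ≥0)) : ℝ) = (2 : ℝ) := by norm_num
          rw [hcast, ENNReal.rpow_two, ← ENNReal.ofReal_pow dist_nonneg,
            ← ENNReal.ofReal_mul (by positivity)]
          congr 1
          ring
      _ = (κ : ℝ≥0∞) * edist p q ^ (((2 : ℝ≥0)) : ℝ) := by rw [edist_dist]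
  -- positive measure of the image
  have h1 : volume E' ≤ (κ : ℝ≥0∞) * μH[2] K := by
    have h := hHolder.hausdorffMeasure_image_le (by norm_num) (d := 1) zero_le_one
    rw [hfimg] at h
    have hre : (μH[1] : Measure ℝ) E' = volume E' := by
      rw [MeasureTheory.hausdorffMeasure_real]
    rw [hre] at h
    simpa using h
  have h2 : μH[(2 : ℝ)] K ≤ 2 * volume K := by
    have hanti := PiLp.antilipschitzWith_ofLp 2 (fun _ : Fin 2 => ℝ)
    have hlip : LipschitzWith ((Fintype.card (Fin 2) : ℝ≥0) ^ (1 / (2 : ℝ≥0∞)).toReal)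
        (⇑(WithLp.equiv 2 (Fin 2 → ℝ)).symm) :=
      hanti.to_rightInverse (WithLp.equiv 2 (Fin 2 → ℝ)).apply_symm_apply
    have himg : (⇑(WithLp.equiv 2 (Fin 2 → ℝ)).symm) '' ((WithLp.equiv 2 (Fin 2 → ℝ)) '' K) = K :=
      Equiv.symm_image_image _ K
    have h3 := hlip.hausdorffMeasure_image_le (d := 2) (by norm_num)
      ((WithLp.equiv 2 (Fin 2 → ℝ)) '' K)
    rw [himg] at h3
    have hpi : (μH[(2 : ℝ)] : Measure (Fin 2 → ℝ)) = volume := by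
      have := MeasureTheory.hausdorffMeasure_pi_real (ι := Fin 2)
      simpa using this
    have hvol : volume ((WithLp.equiv 2 (Fin 2 → ℝ)) '' K) = volume K := by
      have hmp := (EuclideanSpace.volume_preserving_symm_measurableEquiv_toLp (Fin 2)).symm
      have himg2 : (WithLp.equiv 2 (Fin 2 → ℝ)) '' K
          = (MeasurableEquiv.toLp 2 (Fin 2 → ℝ)).symm.symm ⁻¹' K :=
        Equiv.image_eq_preimage_symm _ K
      rw [himg2]
      exact hmp.measure_preimage hKmeas.nullMeasurableSet
    have hconst : (((Fintype.card (Fin 2) : ℝ≥0) ^ (1 / (2 : ℝ≥0∞)).toReal : ℝ≥0) : ℝ≥0∞) ^ (2 : ℝ)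
        = 2 := by
      have ht : (1 / (2 : ℝ≥0∞)).toReal = 1 / 2 := by simp
      rw [ht, ENNReal.coe_rpow_of_ne_zero (by simp), ← ENNReal.rpow_mul]
      norm_num
    rw [hpi, hvol, hconst] at h3
    exact h3
  have hKpos : 0 < volume K := by
    rcases eq_or_lt_of_le (zero_le : 0 ≤ volume K) with h0 | h
    · exfalso
      have : volume E' ≤ 0 := by
        calc volume E' ≤ (κ : ℝ≥0∞) * μH[2] K := h1
          _ ≤ (κ : ℝ≥0∞) * (2 * volume K) := by
              exact mul_le_mul_right h2 _
          _ = 0 := by rw [← h0]; ring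
      exact absurd (le_antisymm this zero_le) (ne_of_gt hpos)
    · exact h
  -- choose N
  obtain ⟨N, hNgt⟩ := exists_nat_gt (max 2 (25 * C ^ 2 / (4 * c ^ 2)))
  have hN2 : (2 : ℝ) < N := lt_of_le_of_lt (le_max_left _ _) hNgt
  have hNc : 25 * C ^ 2 / (4 * c ^ 2) < N := lt_of_le_of_lt (le_max_right _ _) hNgt
  have hNpos : (0 : ℝ) < N := by linarith
  -- density point
  have hbes := Besicovitch.ae_tendsto_measure_inter_div_of_measurableSet
    (volume : Measure (EuclideanSpace ℝ (Fin 2))) hKmeas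
  obtain ⟨x₀, hx₀K, hx₀⟩ : ∃ x ∈ K, Filter.Tendsto
      (fun r => volume (K ∩ closedBall x r) / volume (closedBall x r))
      (nhdsWithin 0 (Ioi 0)) (nhds (K.indicator 1 x)) := by
    by_contra hcon
    push_neg at hcon
    have hsub : K ⊆ {x | ¬ Filter.Tendsto
        (fun r => volume (K ∩ closedBall x r) / volume (closedBall x r))
        (nhdsWithin 0 (Ioi 0)) (nhds (K.indicator 1 x))} := fun x hx => hcon x hx
    have : volume K = 0 := measure_mono_null hsub hbes
    exact absurd this (ne_of_gt hKpos)
  rw [Set.indicator_of_mem hx₀K] at hx₀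
  simp only [Pi.one_apply] at hx₀
  -- threshold
  set εT : ℝ≥0∞ := ENNReal.ofReal (1 / (128 * N ^ 2)) with hεTdef
  have hεTpos : 0 < εT := by
    rw [hεTdef]
    apply ENNReal.ofReal_pos.2
    positivity
  have hεTle : εT ≤ 1 := by
    rw [hεTdef]
    apply ENNReal.ofReal_le_one.2
    rw [div_le_one (by positivity)]
    nlinarith
  have hlt1 : (1 : ℝ≥0∞) - εT < 1 :=
    ENNReal.sub_lt_self ENNReal.one_ne_top one_ne_zero (ne_of_gt hεTpos)
  have hev : ∀ᶠ r in nhdsWithin (0:ℝ) (Ioi 0),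
      1 - εT < volume (K ∩ closedBall x₀ r) / volume (closedBall x₀ r) :=
    hx₀.eventually (eventually_gt_nhds hlt1)
  obtain ⟨r, hratio, hrmem⟩ := (hev.and self_mem_nhdsWithin).exists
  have hrpos : 0 < r := hrmem
  -- ball measure formula
  set ι : ℝ≥0∞ := volume (ball (0 : EuclideanSpace ℝ (Fin 2)) 1) with hιdef
  have hball : ∀ (z : EuclideanSpace ℝ (Fin 2)) (s : ℝ), 0 ≤ s →
      volume (closedBall z s) = ENNReal.ofReal (s ^ 2) * ι := by
    intro z s hs
    rw [Measure.addHaar_closedBall volume z hs, finrank_euclideanSpace_fin]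
  have hιpos : 0 < ι := measure_ball_pos _ _ one_pos
  have hιtop : ι ≠ ⊤ := measure_ball_lt_top.ne
  have hBfin : volume (closedBall x₀ r) ≠ ⊤ := measure_closedBall_lt_top.ne
  have hBpos : 0 < volume (closedBall x₀ r) := measure_closedBall_pos _ _ hrpos
  -- small complement
  have hdiff : volume (closedBall x₀ r \ K) ≤ εT * volume (closedBall x₀ r) := by
    have hgt : (1 - εT) * volume (closedBall x₀ r) < volume (K ∩ closedBall x₀ r) := by
      rw [← ENNReal.lt_div_iff_mul_lt (Or.inl hBpos.ne') (Or.inl hBfin)]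
      exact hratio
    have hsplit : volume (closedBall x₀ r ∩ K) + volume (closedBall x₀ r \ K)
        = volume (closedBall x₀ r) := measure_inter_add_diff _ hKmeas
    have hone : (1 - εT) * volume (closedBall x₀ r) + εT * volume (closedBall x₀ r)
        = volume (closedBall x₀ r) := by
      rw [← add_mul, tsub_add_cancel_of_le hεTle, one_mul]
    have hI : volume (closedBall x₀ r ∩ K) ≠ ⊤ :=
      ((measure_mono Set.inter_subset_left).trans_lt measure_closedBall_lt_top).ne
    have hKint : volume (K ∩ closedBall x₀ r) = volume (closedBall x₀ r ∩ K) :=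
      by rw [Set.inter_comm]
    rw [hKint] at hgt
    calc volume (closedBall x₀ r \ K)
        = (volume (closedBall x₀ r ∩ K) + volume (closedBall x₀ r \ K))
            - volume (closedBall x₀ r ∩ K) := by
          rw [ENNReal.add_sub_cancel_left hI]
      _ = volume (closedBall x₀ r) - volume (closedBall x₀ r ∩ K) := by rw [hsplit]
      _ ≤ volume (closedBall x₀ r) - (1 - εT) * volume (closedBall x₀ r) :=
          tsub_le_tsub_left hgt.le _
      _ ≤ εT * volume (closedBall x₀ r) := by
          rw [tsub_le_iff_right]
          rw [add_comm] at hone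
          exact le_of_eq hone.symm
  -- nearby points of K
  set δ : ℝ := r / (8 * N) with hδdef
  have hδpos : 0 < δ := by positivity
  have hδle : δ ≤ r / 8 := by
    rw [hδdef]
    apply div_le_div_of_nonneg_left hrpos.le (by norm_num)
    nlinarith
  have hnear : ∀ z : EuclideanSpace ℝ (Fin 2), dist z x₀ ≤ r / 2 →
      ∃ p ∈ K, dist p z ≤ δ := by
    intro z hz
    by_contra hcon
    push_neg at hcon
    have hsub : closedBall z δ ⊆ closedBall x₀ r \ K := by
      intro w hw
      rw [mem_closedBall] at hw
      constructor
      · rw [mem_closedBall]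
        calc dist w x₀ ≤ dist w z + dist z x₀ := dist_triangle _ _ _
          _ ≤ δ + r / 2 := add_le_add hw hz
          _ ≤ r := by linarith
      · intro hwK
        exact absurd hw (not_le.2 (hcon w hwK))
    have hmono := (measure_mono hsub).trans hdiff
    rw [hball z δ hδpos.le, hball x₀ r hrpos.le] at hmono
    have hmono2 : ENNReal.ofReal (δ ^ 2) ≤ εT * ENNReal.ofReal (r ^ 2) := by
      rw [← mul_assoc] at hmono
      exact (ENNReal.mul_le_mul_iff_left hιpos.ne' hιtop).1 hmono
    rw [hεTdef, ← ENNReal.ofReal_mul (by positivity)] at hmono2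
    rw [ENNReal.ofReal_le_ofReal_iff (by positivity)] at hmono2
    have : δ ^ 2 = r ^ 2 / (64 * N ^ 2) := by
      rw [hδdef]; field_simp; ring
    rw [this] at hmono2
    have : r ^ 2 / (64 * N ^ 2) ≤ r ^ 2 / (128 * N ^ 2) := by
      calc r ^ 2 / (64 * N ^ 2) ≤ 1 / (128 * N ^ 2) * r ^ 2 := hmono2
        _ = r ^ 2 / (128 * N ^ 2) := by ring
    have h64 : (0:ℝ) < 64 * N ^ 2 := by positivity
    have h128 : (0:ℝ) < 128 * N ^ 2 := by positivity
    rw [div_le_div_iff₀ h64 h128] at this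
    nlinarith [mul_pos (mul_pos hrpos hrpos) (mul_pos hNpos hNpos)]
  -- the chain of points
  set u : EuclideanSpace ℝ (Fin 2) := EuclideanSpace.single (0 : Fin 2) (1 : ℝ) with hudef
  have hu : ‖u‖ = 1 := by simp [hudef]
  set coef : ℕ → ℝ := fun k => 3 * r / 8 * ((min k N : ℕ) : ℝ) / N with hcoefdef
  set z : ℕ → EuclideanSpace ℝ (Fin 2) := fun k => x₀ + coef k • u with hzdef
  have hzz : ∀ k l, dist (z k) (z l) = |coef k - coef l| := by
    intro k l
    rw [hzdef]
    exact no_bilip_dist_smul x₀ u hu (coef k) (coef l)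
  have hzx : ∀ k, dist (z k) x₀ = |coef k| := by
    intro k
    have hx0 : x₀ = x₀ + (0 : ℝ) • u := by rw [zero_smul, add_zero]
    calc dist (z k) x₀ = dist (x₀ + coef k • u) (x₀ + (0 : ℝ) • u) := by
          rw [hzdef]; rw [← hx0]
      _ = |coef k - 0| := no_bilip_dist_smul x₀ u hu _ _
      _ = |coef k| := by rw [sub_zero]
  have hcoef_nonneg : ∀ k, 0 ≤ coef k := by
    intro k
    rw [hcoefdef]
    positivity
  have hcoef_le : ∀ k, coef k ≤ 3 * r / 8 := by
    intro k
    rw [hcoefdef]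
    simp only
    rw [div_le_iff₀ hNpos]
    have hk : ((min k N : ℕ) : ℝ) ≤ (N : ℝ) := Nat.cast_le.2 (min_le_right k N)
    nlinarith
  have hzx₀ : ∀ k, dist (z k) x₀ ≤ r / 2 := by
    intro k
    rw [hzx k, abs_of_nonneg (hcoef_nonneg k)]
    have := hcoef_le k
    linarith
  choose p hpK hpz using fun k => hnear (z k) (hzx₀ k)
  set t : ℕ → ℝ := fun k => f (p k) with htdef
  -- step distances
  have hzstep : ∀ k, k < N → dist (z k) (z (k + 1)) = 3 * r / (8 * N) := by
    intro k hk
    have hmin1 : min k N = k := min_eq_left (le_of_lt hk)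
    have hmin2 : min (k + 1) N = k + 1 := min_eq_left hk
    rw [hzz k (k + 1), hcoefdef]
    simp only [hmin1, hmin2]
    have hNne : (N : ℝ) ≠ 0 := ne_of_gt hNpos
    have : 3 * r / 8 * ((k : ℕ) : ℝ) / N - 3 * r / 8 * (((k + 1 : ℕ)) : ℝ) / N
        = -(3 * r / (8 * N)) := by
      push_cast
      field_simp
      ring
    rw [this, abs_neg, abs_of_nonneg (by positivity)]
  have hstep : ∀ k, k < N → dist (p k) (p (k + 1)) ≤ 5 * r / (8 * N) := by
    intro k hk
    calc dist (p k) (p (k + 1))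
        ≤ dist (p k) (z k) + dist (z k) (z (k + 1)) + dist (z (k + 1)) (p (k + 1)) :=
          dist_triangle4 _ _ _ _
      _ ≤ δ + 3 * r / (8 * N) + δ := by
          refine add_le_add (add_le_add (hpz k) (le_of_eq (hzstep k hk))) ?_
          rw [dist_comm]; exact hpz (k + 1)
      _ = 5 * r / (8 * N) := by
          rw [hδdef]
          field_simp
          ring
  -- endpoints far apart
  have hzN : dist (z 0) (z N) = 3 * r / 8 := by
    rw [hzz 0 N, hcoefdef]
    simp only [Nat.min_self, min_eq_left (Nat.zero_le N), Nat.cast_zero]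
    have hNne : (N : ℝ) ≠ 0 := ne_of_gt hNpos
    have : 3 * r / 8 * (0 : ℝ) / N - 3 * r / 8 * ((N : ℕ) : ℝ) / N = -(3 * r / 8) := by
      field_simp
      ring
    rw [this, abs_neg, abs_of_nonneg (by positivity)]
  have hends : r / 4 ≤ dist (p 0) (p N) := by
    have htri : dist (z 0) (z N) ≤ dist (z 0) (p 0) + dist (p 0) (p N) + dist (p N) (z N) :=
      dist_triangle4 _ _ _ _
    rw [hzN] at htri
    have h1 : dist (z 0) (p 0) ≤ δ := by rw [dist_comm]; exact hpz 0
    have h2 : dist (p N) (z N) ≤ δ := hpz N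
    have hδ16 : δ ≤ r / 16 := by
      rw [hδdef, div_le_div_iff₀ (by positivity) (by norm_num)]
      nlinarith
    linarith
  -- lower bound for |t 0 - t N|
  have hlowt : r ^ 2 / (16 * C ^ 2) ≤ |t 0 - t N| := by
    have h1 := hfdistC (p 0) (hpK 0) (p N) (hpK N)
    have h2 : (r / 4) ^ 2 ≤ ‖p 0 - p N‖ ^ 2 := by
      rw [← dist_eq_norm]
      apply pow_le_pow_left₀ (by positivity) hends
    calc r ^ 2 / (16 * C ^ 2) = (r / 4) ^ 2 / C ^ 2 := by ring
      _ ≤ ‖p 0 - p N‖ ^ 2 / C ^ 2 := by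
          apply div_le_div_of_nonneg_right h2 (by positivity) |>.trans_eq rfl
      _ ≤ |t 0 - t N| := h1
  -- upper bound via telescoping
  have hupt : |t 0 - t N| ≤ N * ((5 * r / (8 * N)) ^ 2 / c ^ 2) := by
    have htele : dist (t 0) (t N) ≤ ∑ i ∈ Finset.range N, dist (t i) (t (i + 1)) :=
      dist_le_range_sum_dist t N
    have hbound : ∀ i ∈ Finset.range N,
        dist (t i) (t (i + 1)) ≤ (5 * r / (8 * N)) ^ 2 / c ^ 2 := by
      intro i hi
      rw [Finset.mem_range] at hi
      have h1 := hfdist (p i) (hpK i) (p (i + 1)) (hpK (i + 1))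
      have h2 : ‖p i - p (i + 1)‖ ^ 2 ≤ (5 * r / (8 * N)) ^ 2 := by
        rw [← dist_eq_norm]
        exact pow_le_pow_left₀ dist_nonneg (hstep i hi) 2
      calc dist (t i) (t (i + 1)) = |t i - t (i + 1)| := Real.dist_eq _ _
        _ ≤ ‖p i - p (i + 1)‖ ^ 2 / c ^ 2 := h1
        _ ≤ (5 * r / (8 * N)) ^ 2 / c ^ 2 := by
            apply div_le_div_of_nonneg_right h2 (by positivity) |>.trans_eq rfl
    have hsum : ∑ i ∈ Finset.range N, dist (t i) (t (i + 1))
        ≤ N * ((5 * r / (8 * N)) ^ 2 / c ^ 2) := by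
      calc ∑ i ∈ Finset.range N, dist (t i) (t (i + 1))
          ≤ ∑ _i ∈ Finset.range N, (5 * r / (8 * N)) ^ 2 / c ^ 2 :=
            Finset.sum_le_sum hbound
        _ = N * ((5 * r / (8 * N)) ^ 2 / c ^ 2) := by
            rw [Finset.sum_const, Finset.card_range, nsmul_eq_mul]
    calc |t 0 - t N| = dist (t 0) (t N) := (Real.dist_eq _ _).symm
      _ ≤ _ := htele
      _ ≤ _ := hsum
  -- contradiction
  have hfinal : r ^ 2 / (16 * C ^ 2) ≤ 25 * r ^ 2 / (64 * N * c ^ 2) := by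
    have : (N : ℝ) * ((5 * r / (8 * N)) ^ 2 / c ^ 2) = 25 * r ^ 2 / (64 * N * c ^ 2) := by
      field_simp
      ring
    rw [← this]
    exact hlowt.trans hupt
  rw [div_le_div_iff₀ (by positivity) (by positivity)] at hfinal
  have hNc' : 25 * C ^ 2 < (N : ℝ) * (4 * c ^ 2) := by
    rw [div_lt_iff₀ (by positivity)] at hNc
    linarith
  have hr2 : (0 : ℝ) < r ^ 2 := by positivity
  have hmul := mul_lt_mul_of_pos_right hNc' hr2
  nlinarith [hmul, hfinal]

/-- If `E ⊆ ℝ` is measurable with positive Lebesgue measure and `0 < c ≤ C`, then there is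
no map `g : E → ℝ²` with `c|x-y|^(1/2) ≤ ‖g x - g y‖ ≤ C|x-y|^(1/2)` for all `x, y ∈ E`;
i.e. no map from the snowflaked real line to the Euclidean plane is bi-Lipschitz on a set
of positive Lebesgue measure. -/
theorem no_bilipschitz_on_positive_measure (E : Set ℝ) (hE : MeasurableSet E)
    (hpos : 0 < MeasureTheory.volume E) (c C : ℝ) (hc : 0 < c) (hcC : c ≤ C) :
    ¬ ∃ g : E → EuclideanSpace ℝ (Fin 2), ∀ x y : E,
        c * |(x : ℝ) - (y : ℝ)| ^ ((1 : ℝ) / 2) ≤ ‖g x - g y‖ ∧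
        ‖g x - g y‖ ≤ C * |(x : ℝ) - (y : ℝ)| ^ ((1 : ℝ) / 2) := by
  rintro ⟨g, hg⟩
  classical
  set G : ℝ → EuclideanSpace ℝ (Fin 2) := fun x => if h : x ∈ E then g ⟨x, h⟩ else 0 with hGdef
  have hGbound : ∀ x ∈ E, ∀ y ∈ E,
      c * |x - y| ^ ((1 : ℝ) / 2) ≤ ‖G x - G y‖ ∧
      ‖G x - G y‖ ≤ C * |x - y| ^ ((1 : ℝ) / 2) := by
    intro x hx y hy
    have : G x = g ⟨x, hx⟩ := dif_pos hx
    have h2 : G y = g ⟨y, hy⟩ := dif_pos hy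
    rw [this, h2]
    exact hg ⟨x, hx⟩ ⟨y, hy⟩
  obtain ⟨E', hE'sub, hE'comp, hE'pos⟩ : ∃ E' ⊆ E, IsCompact E' ∧ 0 < volume E' :=
    hE.exists_lt_isCompact hpos
  exact no_bilip_aux E' hE'comp hE'pos c C hc (lt_of_lt_of_le hc hcC) G
    (fun x hx y hy => (hGbound x (hE'sub hx) y (hE'sub hy)).1)
    (fun x hx y hy => (hGbound x (hE'sub hx) y (hE'sub hy)).2)
end
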